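/- Let K be a field of characteristic 0 and n = 2, and let f ∈ K[x_1,x_2,y_1,y_2] be homogeneous with respect to the total degree in x_2 and y_2. If φ_α(f) = 0 for every nonzero α ∈ K (where φ_α fixes x_1,y_1 and sends x_2 ↦ αx_1, y_2 ↦ αy_1), then f is divisible by u_{12} = x_1y_2 − x_2y_1. -/

import Mathlib

open MvPolynomial

/-- The K-algebra endomorphism `φ_α` of `K[x_1,x_2,y_1,y_2]` with
`φ_α(x_1) = x_1`, `φ_α(y_1) = y_1`, `φ_α(x_2) = α x_1`, `φ_α(y_2) = α y_1`.
Here `x_i = X (Sum.inl (i-1))` and `y_i = X (Sum.inr (i-1))`. -/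
noncomputable def phiAlpha2 (K : Type*) [CommSemiring K] (α : K) :
    MvPolynomial (Fin 2 ⊕ Fin 2) K →ₐ[K] MvPolynomial (Fin 2 ⊕ Fin 2) K :=
  aeval (Sum.elim
    (fun i => if i = 0 then X (Sum.inl (0 : Fin 2)) else C α * X (Sum.inl (0 : Fin 2)))
    (fun i => if i = 0 then X (Sum.inr (0 : Fin 2)) else C α * X (Sum.inr (0 : Fin 2))))

lemma prime_X0 {K : Type*} [Field K] : Prime (X (0 : Fin 3) : MvPolynomial (Fin 3) K) := by
  rw [← MulEquiv.prime_iff (MvPolynomial.finSuccEquiv K 2).toRingEquiv.toMulEquiv]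
  have h : (MvPolynomial.finSuccEquiv K 2).toRingEquiv.toMulEquiv (X (0 : Fin 3) : MvPolynomial (Fin 3) K)
      = (Polynomial.X : Polynomial (MvPolynomial (Fin 2) K)) := by
    show MvPolynomial.finSuccEquiv K 2 (X 0) = _
    exact finSuccEquiv_X_zero
  rw [h]
  exact Polynomial.prime_X

def e4 : (Fin 2 ⊕ Fin 2) ≃ Option (Fin 3) where
  toFun := Sum.elim ![some 0, some 1] ![some 2, none]
  invFun o := o.elim (Sum.inr 1) ![Sum.inl 0, Sum.inl 1, Sum.inr 0]
  left_inv := by decide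
  right_inv := by decide

lemma prime_q {K : Type*} [Field K] :
    Prime (Polynomial.C (X 0 : MvPolynomial (Fin 3) K) * Polynomial.X
      - Polynomial.C (X 1 * X 2)) := by
  have hX0 : Prime (X (0 : Fin 3) : MvPolynomial (Fin 3) K) := prime_X0
  have hX0nd : ¬ (X (0 : Fin 3) : MvPolynomial (Fin 3) K) ∣ X 1 * X 2 := by
    intro h
    obtain ⟨c, hc⟩ := h
    have := congrArg (eval (fun i : Fin 3 => if i = 0 then (0 : K) else 1)) hc
    simp at this
  have hprim : Polynomial.IsPrimitive (Polynomial.C (X 0 : MvPolynomial (Fin 3) K) * Polynomial.X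
      - Polynomial.C (X 1 * X 2)) := by
    intro r hr
    rw [Polynomial.C_dvd_iff_dvd_coeff] at hr
    have h1 := hr 1
    have hz := hr 0
    simp [Polynomial.coeff_sub] at h1 hz
    obtain ⟨s, hs⟩ := h1
    rcases hX0.irreducible.isUnit_or_isUnit hs with hu | hu
    · exact hu
    · exfalso
      have hXr : (X (0 : Fin 3) : MvPolynomial (Fin 3) K) ∣ r := by
        rw [hs]; exact hu.mul_right_dvd.mpr dvd_rfl
      exact hX0nd (hXr.trans hz)
  letI : NormalizationMonoid (MvPolynomial (Fin 3) K) :=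
    UniqueFactorizationMonoid.normalizationMonoid.toNormalizationMonoid
  letI := UniqueFactorizationMonoid.toNormalizedGCDMonoid (MvPolynomial (Fin 3) K)
  apply UniqueFactorizationMonoid.irreducible_iff_prime.mp
  rw [hprim.irreducible_iff_irreducible_map_fraction_map
    (K := FractionRing (MvPolynomial (Fin 3) K))]
  apply Polynomial.irreducible_of_degree_eq_one
  rw [Polynomial.map_sub, Polynomial.map_mul, Polynomial.map_C, Polynomial.map_X,
    Polynomial.map_C, sub_eq_add_neg, ← Polynomial.C_neg]
  refine Polynomial.degree_linear ?_
  simpa using (IsFractionRing.injective (MvPolynomial (Fin 3) K)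
    (FractionRing (MvPolynomial (Fin 3) K))).ne (a := X 0) (b := 0) (X_ne_zero 0)

lemma prime_u {K : Type*} [Field K] :
    Prime ((X (Sum.inl (0 : Fin 2)) * X (Sum.inr (1 : Fin 2)) -
      X (Sum.inl (1 : Fin 2)) * X (Sum.inr (0 : Fin 2))) : MvPolynomial (Fin 2 ⊕ Fin 2) K) := by
  let Φ := (renameEquiv K e4).trans (optionEquivLeft K (Fin 3))
  rw [← MulEquiv.prime_iff Φ.toRingEquiv.toMulEquiv]
  have h : Φ.toRingEquiv.toMulEquiv ((X (Sum.inl (0 : Fin 2)) * X (Sum.inr (1 : Fin 2)) -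
      X (Sum.inl (1 : Fin 2)) * X (Sum.inr (0 : Fin 2))) : MvPolynomial (Fin 2 ⊕ Fin 2) K)
      = Polynomial.C (X 0 : MvPolynomial (Fin 3) K) * Polynomial.X - Polynomial.C (X 1 * X 2) := by
    show Φ _ = _
    have h1 : e4 (Sum.inl (0 : Fin 2)) = some 0 := rfl
    have h2 : e4 (Sum.inl (1 : Fin 2)) = some 1 := rfl
    have h3 : e4 (Sum.inr (0 : Fin 2)) = some 2 := rfl
    have h4 : e4 (Sum.inr (1 : Fin 2)) = none := rfl
    show (optionEquivLeft K (Fin 3)) (renameEquiv K e4 _) = _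
    rw [renameEquiv_apply, map_sub, map_mul, map_mul, rename_X, rename_X, rename_X, rename_X,
      h1, h2, h3, h4, map_sub, map_mul, map_mul, optionEquivLeft_X_some, optionEquivLeft_X_none,
      optionEquivLeft_X_some, optionEquivLeft_X_some, Polynomial.C_mul]
  rw [h]
  exact prime_q

/-- Corollary (case `n = 2`): if `f ∈ K[x_1,x_2,y_1,y_2]` is homogeneous with respect to the
total degree in `x_2, y_2` and `φ_α(f) = 0` for every nonzero `α ∈ K`, then
`u_{12} = x_1 y_2 - x_2 y_1` divides `f`. -/
theorem u12_divides_when_all_phi_alpha_vanish {K : Type*} [Field K] [CharZero K]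
    (f : MvPolynomial (Fin 2 ⊕ Fin 2) K)
    (hhom : ∃ p : ℕ, ∀ d ∈ f.support,
      d (Sum.inl (1 : Fin 2)) + d (Sum.inr (1 : Fin 2)) = p)
    (h0 : ∀ α : K, α ≠ 0 → phiAlpha2 K α f = 0) :
    (X (Sum.inl (0 : Fin 2)) * X (Sum.inr (1 : Fin 2)) -
      X (Sum.inl (1 : Fin 2)) * X (Sum.inr (0 : Fin 2))) ∣ f := by
  obtain ⟨p, hp⟩ := hhom
  have h1 : phiAlpha2 K 1 f = 0 := h0 1 one_ne_zero
  set x1 : MvPolynomial (Fin 2 ⊕ Fin 2) K := X (Sum.inl (0 : Fin 2)) with hx1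
  set x2 : MvPolynomial (Fin 2 ⊕ Fin 2) K := X (Sum.inl (1 : Fin 2)) with hx2
  set y1 : MvPolynomial (Fin 2 ⊕ Fin 2) K := X (Sum.inr (0 : Fin 2)) with hy1
  set y2 : MvPolynomial (Fin 2 ⊕ Fin 2) K := X (Sum.inr (1 : Fin 2)) with hy2
  set u : MvPolynomial (Fin 2 ⊕ Fin 2) K := x1 * y2 - x2 * y1 with hu
  have hmon : ∀ (d : (Fin 2 ⊕ Fin 2) →₀ ℕ) (c : K), (monomial d c : MvPolynomial (Fin 2 ⊕ Fin 2) K)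
      = C c * (x1 ^ d (Sum.inl 0) * x2 ^ d (Sum.inl 1) * y1 ^ d (Sum.inr 0) * y2 ^ d (Sum.inr 1)) := by
    intro d c
    rw [monomial_eq]
    congr 1
    rw [Finsupp.prod_fintype _ _ (fun _ => pow_zero _), Fintype.prod_sum_type]
    simp only [Fin.prod_univ_two]
    ring
  have hphi : ∀ (d : (Fin 2 ⊕ Fin 2) →₀ ℕ) (c : K),
      phiAlpha2 K 1 (monomial d c)
      = C c * (x1 ^ (d (Sum.inl 0) + d (Sum.inl 1)) * y1 ^ (d (Sum.inr 0) + d (Sum.inr 1))) := by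
    intro d c
    have p1 : phiAlpha2 K 1 x1 = x1 := by simp [phiAlpha2, hx1]
    have p2 : phiAlpha2 K 1 x2 = x1 := by simp [phiAlpha2, hx1, hx2]
    have p3 : phiAlpha2 K 1 y1 = y1 := by simp [phiAlpha2, hy1]
    have p4 : phiAlpha2 K 1 y2 = y1 := by simp [phiAlpha2, hy1, hy2]
    have pC : phiAlpha2 K 1 (C c) = C c := by
      simp [phiAlpha2, algebraMap_eq]
    rw [hmon d c, map_mul, map_mul, map_mul, map_mul, map_pow, map_pow, map_pow, map_pow,
      p1, p2, p3, p4, pC, pow_add]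
    ring
  have key : u ∣ x1 ^ p * f := by
    have e1 : x1 ^ p * f = ∑ d ∈ f.support,
        (x1 ^ p * monomial d (coeff d f) - x2 ^ p * phiAlpha2 K 1 (monomial d (coeff d f))) := by
      rw [Finset.sum_sub_distrib, ← Finset.mul_sum, ← Finset.mul_sum, ← map_sum,
        f.support_sum_monomial_coeff, h1, mul_zero, sub_zero]
    rw [e1]
    refine Finset.dvd_sum fun d hd => ?_
    have hdp : d (Sum.inl 1) + d (Sum.inr 1) = p := hp d hd
    obtain ⟨w, hw⟩ := sub_dvd_pow_sub_pow (x1 * y2) (x2 * y1) (d (Sum.inr 1))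
    refine ⟨C (coeff d f) * x1 ^ (d (Sum.inl 0) + d (Sum.inl 1)) * x2 ^ d (Sum.inl 1)
      * y1 ^ d (Sum.inr 0) * w, ?_⟩
    rw [hphi, hmon, ← hdp, hu]
    linear_combination (C (coeff d f) * x1 ^ (d (Sum.inl 0) + d (Sum.inl 1)) * x2 ^ d (Sum.inl 1)
      * y1 ^ d (Sum.inr 0)) * hw
  have hup : Prime u := prime_u
  rcases hup.dvd_or_dvd key with h | h
  · exfalso
    have hx := hup.dvd_of_dvd_pow h
    obtain ⟨c, hc⟩ := hx
    have := congrArg (eval (Sum.elim (fun _ => (1 : K)) (fun _ => 0))) hc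
    simp [hx1, hu, hx2, hy1, hy2] at this
  · exact h
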